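/- Let F be a field and let F ∈ F[X₁,…,X_N] be a nonzero polynomial such that the shifted polynomial F(X + 1) (shift every variable by 1) has a monomial of support at most k. Then F composed with the shifted succinct SV generator is nonzero: F(G_{n,k}(y,z) + 1) ≠ 0 as a polynomial in (y, z), where G_{n,k} is the succinct Shpilka–Volkovich polynomial map and 1 is the all-ones vector, N = 2^n. -/
import Mathlib


open MvPolynomial

/-- Multilinear monomial exponent vector of a subset. -/
noncomputable def mlMon {n : ℕ} (S : Finset (Fin n)) : Fin n →₀ ℕ :=
  ∑ j ∈ S, Finsupp.single j 1

/-- The succinct Shpilka–Volkovich polynomial `Q_{n,k}(y,z,x)`, with genuine variables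
`y_i` and `z_{i,j}` in the coefficient ring `F[y,z]`. -/
noncomputable def svQ (F : Type*) [Field F] (n k : ℕ) :
    MvPolynomial (Fin n) (MvPolynomial (Fin k ⊕ Fin k × Fin n) F) :=
  ∑ i : Fin k, MvPolynomial.C (MvPolynomial.X (Sum.inl i)) *
    ∏ j : Fin n,
      (MvPolynomial.C (MvPolynomial.X (Sum.inr (i, j))) * MvPolynomial.X j +
        MvPolynomial.C (1 - MvPolynomial.X (Sum.inr (i, j))))

/-- The succinct SV generator: the coordinate indexed by a subset `T ⊆ [n]` is the
coefficient of `∏_{j∈T} x_j` in `Q_{n,k}`, an element of `F[y,z]`. -/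
noncomputable def svG (F : Type*) [Field F] (n k : ℕ) (T : Finset (Fin n)) :
    MvPolynomial (Fin k ⊕ Fin k × Fin n) F :=
  (svQ F n k).coeff (mlMon T)

lemma mlMon_apply {n : ℕ} (S : Finset (Fin n)) (j : Fin n) :
    mlMon S j = if j ∈ S then 1 else 0 := by
  classical
  simp only [mlMon, Finset.sum_apply', Finsupp.single_apply]
  simp [Finset.sum_ite_eq']

lemma mlMon_support {n : ℕ} (S : Finset (Fin n)) : (mlMon S).support = S := by
  ext j
  simp [Finsupp.mem_support_iff, mlMon_apply]

lemma mlMon_injective {n : ℕ} : Function.Injective (mlMon (n := n)) := by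
  intro S T h
  have := congrArg Finsupp.support h
  rwa [mlMon_support, mlMon_support] at this

lemma prod_X_mem {R : Type*} [CommSemiring R] {n : ℕ} (T : Finset (Fin n)) :
    (∏ j ∈ T, (X j : MvPolynomial (Fin n) R)) = monomial (mlMon T) 1 := by
  rw [monomial_eq, C_1, one_mul, Finsupp.prod, mlMon_support]
  exact Finset.prod_congr rfl fun j hj => by rw [mlMon_apply, if_pos hj, pow_one]

lemma coeff_aeval_ite {R σ : Type*} [CommSemiring R] [DecidableEq σ] (P : MvPolynomial σ R)
    (s : Finset σ) (m : σ →₀ ℕ) (hm : m.support ⊆ s) :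
    coeff m (aeval (fun t => if t ∈ s then (X t : MvPolynomial σ R) else 0) P)
      = coeff m P := by
  conv_lhs => rw [P.as_sum]
  rw [map_sum, coeff_sum]
  have h : ∀ m' ∈ P.support,
      coeff m ((aeval (fun t => if t ∈ s then (X t : MvPolynomial σ R) else 0))
        ((monomial m') (coeff m' P))) = if m' = m then coeff m' P else 0 := by
    intro m' _
    rw [aeval_monomial]
    by_cases hsub : m'.support ⊆ s
    · have hp : (m'.prod fun i e => (if i ∈ s then (X i : MvPolynomial σ R) else 0) ^ e)
          = m'.prod fun i e => (X i : MvPolynomial σ R) ^ e :=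
        Finsupp.prod_congr (fun i hi => by rw [if_pos (hsub hi)])
      rw [hp, algebraMap_eq, ← monomial_eq, coeff_monomial]
    · obtain ⟨t, ht, hts⟩ := Finset.not_subset.mp hsub
      have hz : (m'.prod fun i e => (if i ∈ s then (X i : MvPolynomial σ R) else 0) ^ e) = 0 := by
        apply Finset.prod_eq_zero ht
        have h1 := Finsupp.mem_support_iff.mp ht
        simp [if_neg hts, zero_pow h1]
      have hne : m' ≠ m := by intro h; subst h; exact hts (hm ht)
      rw [hz, mul_zero, coeff_zero, if_neg hne]
  rw [Finset.sum_congr rfl h, Finset.sum_ite_eq' P.support m (fun m' => coeff m' P)]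
  by_cases hmem : m ∈ P.support
  · rw [if_pos hmem]
  · rw [if_neg hmem, eq_comm]
    exact MvPolynomial.notMem_support_iff.mp hmem

lemma aeval_aeval' {R : Type*} [CommSemiring R] {σ τ : Type*} {A : Type*} [CommSemiring A]
    [Algebra R A] (f : σ → MvPolynomial τ R) (g : τ → A) (P : MvPolynomial σ R) :
    aeval g (aeval f P) = aeval (fun i => aeval g (f i)) P :=
  AlgHom.congr_fun (MvPolynomial.comp_aeval f (aeval g)) P

set_option maxHeartbeats 1000000 in
set_option synthInstance.maxHeartbeats 400000 in
/-- if the shift `P(X+1)` of a nonzero polynomial `P` (on `N = 2^n`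
variables indexed by subsets of `[n]`) has a monomial of support at most `k`, then
`P ∘ (G_{n,k} + 1) ≠ 0`. -/
theorem stmt10 (F : Type*) [Field F] (n k : ℕ)
    (P : MvPolynomial (Finset (Fin n)) F) (hP : P ≠ 0)
    (hsupp : ∃ m ∈ (MvPolynomial.aeval
        (fun T : Finset (Fin n) =>
          (MvPolynomial.X T : MvPolynomial (Finset (Fin n)) F) + 1) P).support,
      m.support.card ≤ k) :
    MvPolynomial.aeval (fun T : Finset (Fin n) => svG F n k T + 1) P ≠ 0 := by
  classical
  intro hcon
  obtain ⟨m, hm, hcard⟩ := hsupp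
  set P' : MvPolynomial (Finset (Fin n)) F :=
    aeval (fun T : Finset (Fin n) => (X T : MvPolynomial (Finset (Fin n)) F) + 1) P with hP'
  set s : Finset (Finset (Fin n)) := m.support with hs
  set c : ℕ := s.card with hc
  have hsk : c ≤ k := hcard
  set e := s.equivFin with he
  set d : Fin c → Finset (Fin n) := fun i => (e.symm i : Finset (Fin n)) with hd
  have hd_mem : ∀ i, d i ∈ s := fun i => (e.symm i).2
  set v : (Fin k ⊕ Fin k × Fin n) → MvPolynomial (Finset (Fin n)) F :=
    Sum.elim (fun i => if h : (i : ℕ) < c then X (d ⟨i, h⟩) else 0)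
      (fun p => if h : (p.1 : ℕ) < c then (if p.2 ∈ d ⟨p.1, h⟩ then 1 else 0) else 0) with hv
  set φ : MvPolynomial (Fin k ⊕ Fin k × Fin n) F →ₐ[F] MvPolynomial (Finset (Fin n)) F :=
    aeval v with hφ
  -- Claim A
  have hQ : map (φ : MvPolynomial (Fin k ⊕ Fin k × Fin n) F →+* MvPolynomial (Finset (Fin n)) F)
      (svQ F n k) = ∑ T ∈ s, monomial (mlMon T) (X T) := by
    rw [svQ, map_sum]
    have step : ∀ i : Fin k,
        map (φ : MvPolynomial (Fin k ⊕ Fin k × Fin n) F →+* MvPolynomial (Finset (Fin n)) F)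
          (C (X (Sum.inl i)) * ∏ j : Fin n,
            (C (X (Sum.inr (i, j))) * X j + C (1 - X (Sum.inr (i, j)))))
        = if h : (i : ℕ) < c then monomial (mlMon (d ⟨i, h⟩)) (X (d ⟨i, h⟩)) else 0 := by
      intro i
      have hy : ∀ w, φ (X w) = v w := fun w => aeval_X v w
      rw [map_mul, map_C]
      by_cases h : (i : ℕ) < c
      · have hyy : φ (X (Sum.inl i)) = X (d ⟨i, h⟩) := by
          rw [hy]; simp only [hv, Sum.elim_inl]; rw [dif_pos h]
        have hprod : ∀ j : Fin n,
            map (φ : MvPolynomial (Fin k ⊕ Fin k × Fin n) F →+* MvPolynomial (Finset (Fin n)) F)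
              (C (X (Sum.inr (i, j))) * X j + C (1 - X (Sum.inr (i, j))))
            = if j ∈ d ⟨i, h⟩ then X j else 1 := by
          intro j
          have hz : φ (X (Sum.inr (i, j))) = if j ∈ d ⟨i, h⟩ then 1 else 0 := by
            rw [hy]; simp only [hv, Sum.elim_inr]; rw [dif_pos h]
          rw [map_add, map_mul, map_C, map_X, map_C]
          show C (φ (X (Sum.inr (i, j)))) * X j + C (φ (1 - X (Sum.inr (i, j)))) = _
          rw [map_sub, map_one, hz]
          by_cases hj : j ∈ d ⟨i, h⟩
          · rw [if_pos hj, if_pos hj]; simp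
          · rw [if_neg hj, if_neg hj]; simp
        rw [map_prod, Finset.prod_congr rfl (fun j _ => hprod j)]
        have hfil : (∏ j : Fin n, if j ∈ d ⟨i, h⟩ then (X j : MvPolynomial (Fin n) (MvPolynomial (Finset (Fin n)) F)) else 1)
            = ∏ j ∈ d ⟨i, h⟩, (X j : MvPolynomial (Fin n) (MvPolynomial (Finset (Fin n)) F)) := by
          rw [Finset.prod_ite_mem, Finset.univ_inter]
        rw [hfil, prod_X_mem, dif_pos h]
        show C (φ (X (Sum.inl i))) * _ = _
        rw [hyy, C_mul_monomial, mul_one]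
      · have hyy : φ (X (Sum.inl i)) = 0 := by
          rw [hy]; simp only [hv, Sum.elim_inl]; rw [dif_neg h]
        show C (φ (X (Sum.inl i))) * _ = _
        rw [hyy, map_zero, zero_mul, dif_neg h]
    rw [Finset.sum_congr rfl (fun i _ => step i)]
    have hred : ∑ i : Fin k,
        (if h : (i : ℕ) < c then monomial (mlMon (d ⟨i, h⟩))
            (X (d ⟨i, h⟩) : MvPolynomial (Finset (Fin n)) F) else 0)
        = ∑ i : Fin c, monomial (mlMon (d i)) (X (d i) : MvPolynomial (Finset (Fin n)) F) := by
      rw [Fin.sum_univ_eq_sum_range (fun i : ℕ => if h : i < c then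
          monomial (mlMon (d ⟨i, h⟩)) (X (d ⟨i, h⟩) : MvPolynomial (Finset (Fin n)) F) else 0) k]
      rw [← Finset.sum_subset (Finset.range_subset_range.mpr hsk)
          (fun x _ hx => dif_neg (by simpa using hx))]
      rw [← Fin.sum_univ_eq_sum_range (fun i : ℕ => if h : i < c then
          monomial (mlMon (d ⟨i, h⟩)) (X (d ⟨i, h⟩) : MvPolynomial (Finset (Fin n)) F) else 0) c]
      exact Finset.sum_congr rfl fun i _ => by rw [dif_pos i.isLt]
    rw [hred]
    have := Equiv.sum_comp e.symm
        (fun x : {x // x ∈ s} => monomial (mlMon (x : Finset (Fin n)))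
          (X (x : Finset (Fin n)) : MvPolynomial (Finset (Fin n)) F))
    rw [hd]
    rw [this]
    exact Finset.sum_coe_sort s (fun T => monomial (mlMon T) (X T))
  -- Claim B
  have hGT : ∀ T, φ (svG F n k T) = if T ∈ s then X T else 0 := by
    intro T
    have h1 : φ (svG F n k T) = coeff (mlMon T)
        (map (φ : MvPolynomial (Fin k ⊕ Fin k × Fin n) F →+* MvPolynomial (Finset (Fin n)) F)
          (svQ F n k)) := (coeff_map _ _ _).symm
    rw [h1, hQ, coeff_sum]
    have h2 : ∀ T' ∈ s, coeff (mlMon T) ((monomial (mlMon T')) (X T' : MvPolynomial (Finset (Fin n)) F))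
        = if T' = T then X T' else 0 := by
      intro T' _
      rw [coeff_monomial]
      congr 1
      simp [mlMon_injective.eq_iff]
    rw [Finset.sum_congr rfl h2, Finset.sum_ite_eq']
  -- Main argument
  have h3 : φ (aeval (fun T : Finset (Fin n) => svG F n k T + 1) P)
      = aeval (fun T : Finset (Fin n) =>
          (if T ∈ s then (X T : MvPolynomial (Finset (Fin n)) F) else 0) + 1) P := by
    rw [← AlgHom.comp_apply, MvPolynomial.comp_aeval]
    have hf : (fun T : Finset (Fin n) => φ (svG F n k T + 1))
        = fun T : Finset (Fin n) =>
          (if T ∈ s then (X T : MvPolynomial (Finset (Fin n)) F) else 0) + 1 := by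
      funext T
      rw [map_add, map_one, hGT]
    rw [hf]
  have h4 : aeval (fun T : Finset (Fin n) =>
          (if T ∈ s then (X T : MvPolynomial (Finset (Fin n)) F) else 0) + 1) P
      = aeval (fun T : Finset (Fin n) =>
          if T ∈ s then (X T : MvPolynomial (Finset (Fin n)) F) else 0) P' := by
    rw [hP', aeval_aeval']
    have hf : (fun T : Finset (Fin n) =>
          aeval (fun T' : Finset (Fin n) =>
            if T' ∈ s then (X T' : MvPolynomial (Finset (Fin n)) F) else 0)
            ((X T : MvPolynomial (Finset (Fin n)) F) + 1))
        = fun T : Finset (Fin n) =>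
          (if T ∈ s then (X T : MvPolynomial (Finset (Fin n)) F) else 0) + 1 := by
      funext T
      rw [map_add, aeval_X, map_one]
    rw [hf]
  have h5 : coeff m (aeval (fun T : Finset (Fin n) =>
      if T ∈ s then (X T : MvPolynomial (Finset (Fin n)) F) else 0) P') = coeff m P' :=
    coeff_aeval_ite P' s m (by rw [hs])
  rw [← h4, ← h3, hcon, map_zero] at h5
  exact MvPolynomial.mem_support_iff.mp hm h5.symm
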